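/- Let G be a centered square-integrable process on [a,b], let a = s₀ < s₁ < … < sₙ = b be the uniform partition with mesh δ = (b−a)/n, and set ξ_k := G(s_{k+1}) − G(s_k), k = 0,…,n−1. Assume (i) E[ξᵢξⱼ] ≥ 0 for all i,j, (ii) E[ξ_k²] ≤ C₂δ^{2H} for all k, and (iii) E[(G(b) − G(a))²] ≤ C₂(b−a)^{2H}, for some constants C₂ > 0 and H ∈ (1/2,1). Then ∑_{i,j=0}^{n−1} (E[ξᵢξⱼ])² ≤ C₂² δ^{2H} (b−a)^{2H}. -/

import Mathlib

open MeasureTheory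

private lemma memLp_integrable_mul {Ω : Type*} {mΩ : MeasurableSpace Ω} {P : Measure Ω}
    {f g : Ω → ℝ} (hf : MemLp f 2 P) (hg : MemLp g 2 P) :
    Integrable (fun ω => f ω * g ω) P := by
  refine Integrable.mono' ((hf.integrable_sq.add hg.integrable_sq).div_const 2)
    (hf.1.mul hg.1) ?_
  filter_upwards with ω
  simp only [Pi.add_apply]
  rw [Real.norm_eq_abs, abs_mul]
  nlinarith [sq_nonneg (|f ω| - |g ω|), sq_abs (f ω), sq_abs (g ω), abs_nonneg (f ω),
    abs_nonneg (g ω)]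

private lemma cauchy_schwarz_int {Ω : Type*} {mΩ : MeasurableSpace Ω} {P : Measure Ω}
    {f g : Ω → ℝ} (hf : MemLp f 2 P) (hg : MemLp g 2 P) :
    ∫ ω, f ω * g ω ∂P ≤ (∫ ω, (f ω) ^ 2 ∂P).sqrt * (∫ ω, (g ω) ^ 2 ∂P).sqrt := by
  have h : ∫ ω, f ω * g ω ∂P ≤ ∫ ω, ‖f ω‖ * ‖g ω‖ ∂P := by
    refine integral_mono_ae (memLp_integrable_mul hf hg) ?_ ?_
    · simpa [Real.norm_eq_abs, abs_mul] using (memLp_integrable_mul hf hg).abs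
    · filter_upwards with ω
      calc f ω * g ω ≤ |f ω * g ω| := le_abs_self _
        _ = ‖f ω‖ * ‖g ω‖ := by rw [abs_mul]; rfl
  refine h.trans ?_
  have h2 : (ENNReal.ofReal (2:ℝ)) = 2 := by norm_num
  have := integral_mul_norm_le_Lp_mul_Lq (μ := P) (f := f) (g := g) (p := 2) (q := 2)
    (by constructor <;> norm_num) (by rw [h2]; exact hf) (by rw [h2]; exact hg)
  refine this.trans_eq ?_
  have hnf : ∫ ω, ‖f ω‖ ^ (2:ℝ) ∂P = ∫ ω, (f ω) ^ 2 ∂P := by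
    refine integral_congr_ae (Filter.Eventually.of_forall fun ω => ?_)
    show ‖f ω‖ ^ (2:ℝ) = f ω ^ 2
    rw [Real.rpow_two, Real.norm_eq_abs, sq_abs]
  have hng : ∫ ω, ‖g ω‖ ^ (2:ℝ) ∂P = ∫ ω, (g ω) ^ 2 ∂P := by
    refine integral_congr_ae (Filter.Eventually.of_forall fun ω => ?_)
    show ‖g ω‖ ^ (2:ℝ) = g ω ^ 2
    rw [Real.rpow_two, Real.norm_eq_abs, sq_abs]
  rw [hnf, hng, Real.sqrt_eq_rpow, Real.sqrt_eq_rpow]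

theorem sum_sq_covariances_bound
    {Ω : Type*} {mΩ : MeasurableSpace Ω} (P : Measure Ω) [IsProbabilityMeasure P]
    (a b C₂ H : ℝ) (hab : a < b) (hC₂ : 0 < C₂) (hH : H ∈ Set.Ioo (1/2 : ℝ) 1)
    (n : ℕ) (hn : 0 < n) (δ : ℝ) (hδ : δ = (b - a) / n)
    (G : ℝ → Ω → ℝ)
    (hL2 : ∀ k : ℕ, k ≤ n → MemLp (G (a + k * δ)) 2 P)
    (hcent : ∀ k : ℕ, k ≤ n → ∫ ω, G (a + k * δ) ω ∂P = 0)
    (ξ : Fin n → Ω → ℝ)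
    (hξ : ∀ k : Fin n, ξ k =
      fun ω => G (a + ((k : ℕ) + 1) * δ) ω - G (a + (k : ℕ) * δ) ω)
    (hpos : ∀ i j, 0 ≤ ∫ ω, ξ i ω * ξ j ω ∂P)
    (hvar : ∀ k, ∫ ω, (ξ k ω) ^ 2 ∂P ≤ C₂ * δ ^ (2 * H))
    (htot : ∫ ω, (G b ω - G a ω) ^ 2 ∂P ≤ C₂ * (b - a) ^ (2 * H)) :
    ∑ i, ∑ j, (∫ ω, ξ i ω * ξ j ω ∂P) ^ 2 ≤ C₂ ^ 2 * δ ^ (2 * H) * (b - a) ^ (2 * H) := by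
  have hδpos : 0 < δ := by
    rw [hδ]; exact div_pos (sub_pos.mpr hab) (by exact_mod_cast hn)
  have hM : 0 ≤ C₂ * δ ^ (2 * H) := by positivity
  -- each ξ k is in L2
  have hξL2 : ∀ k : Fin n, MemLp (ξ k) 2 P := by
    intro k
    rw [hξ k]
    have h1 : MemLp (G (a + ((k : ℕ) + 1 : ℕ) * δ)) 2 P := hL2 _ k.2
    have h2 : MemLp (G (a + (k : ℕ) * δ)) 2 P := hL2 _ (le_of_lt k.2)
    push_cast at h1
    exact h1.sub h2
  -- covariance bound
  have hcov : ∀ i j, (∫ ω, ξ i ω * ξ j ω ∂P) ≤ C₂ * δ ^ (2 * H) := by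
    intro i j
    have hCS := cauchy_schwarz_int (hξL2 i) (hξL2 j)
    refine hCS.trans ?_
    have hi : (∫ ω, (ξ i ω) ^ 2 ∂P).sqrt ≤ (C₂ * δ ^ (2 * H)).sqrt :=
      Real.sqrt_le_sqrt (hvar i)
    have hj : (∫ ω, (ξ j ω) ^ 2 ∂P).sqrt ≤ (C₂ * δ ^ (2 * H)).sqrt :=
      Real.sqrt_le_sqrt (hvar j)
    calc (∫ ω, (ξ i ω) ^ 2 ∂P).sqrt * (∫ ω, (ξ j ω) ^ 2 ∂P).sqrt
        ≤ (C₂ * δ ^ (2 * H)).sqrt * (C₂ * δ ^ (2 * H)).sqrt :=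
          mul_le_mul hi hj (Real.sqrt_nonneg _) (Real.sqrt_nonneg _)
      _ = C₂ * δ ^ (2 * H) := Real.mul_self_sqrt hM
  -- telescoping: ∑ k, ξ k ω = G b ω - G a ω
  have hb' : a + (n : ℝ) * δ = b := by
    rw [hδ]
    field_simp
    ring
  have htel : ∀ ω, ∑ k, ξ k ω = G b ω - G a ω := by
    intro ω
    have : ∑ k : Fin n, ξ k ω = ∑ i ∈ Finset.range n,
        (G (a + ((i : ℝ) + 1) * δ) ω - G (a + (i : ℝ) * δ) ω) := by
      simp only [hξ]
      exact Fin.sum_univ_eq_sum_range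
        (fun i : ℕ => G (a + ((i : ℝ) + 1) * δ) ω - G (a + (i : ℝ) * δ) ω) n
    rw [this]
    have := Finset.sum_range_sub (fun i : ℕ => G (a + (i : ℝ) * δ) ω) n
    simp only [Nat.cast_add, Nat.cast_one] at this ⊢
    rw [this, hb']
    norm_num
  -- sum of covariances = E[(G b - G a)^2]
  have hsum : ∑ i, ∑ j, (∫ ω, ξ i ω * ξ j ω ∂P) = ∫ ω, (G b ω - G a ω) ^ 2 ∂P := by
    have hint : ∀ i j : Fin n, Integrable (fun ω => ξ i ω * ξ j ω) P :=
      fun i j => memLp_integrable_mul (hξL2 i) (hξL2 j)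
    calc ∑ i, ∑ j, (∫ ω, ξ i ω * ξ j ω ∂P)
        = ∫ ω, ∑ i, ∑ j, ξ i ω * ξ j ω ∂P := by
          rw [integral_finset_sum _ (fun i _ => integrable_finset_sum _ (fun j _ => hint i j))]
          exact Finset.sum_congr rfl fun i _ => (integral_finset_sum _ fun j _ => hint i j).symm
      _ = ∫ ω, (G b ω - G a ω) ^ 2 ∂P := by
          refine integral_congr_ae (Filter.Eventually.of_forall fun ω => ?_)
          show ∑ i, ∑ j, ξ i ω * ξ j ω = (G b ω - G a ω) ^ 2
          rw [← htel ω, sq, Finset.sum_mul_sum]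
  -- final chain
  calc ∑ i, ∑ j, (∫ ω, ξ i ω * ξ j ω ∂P) ^ 2
      ≤ ∑ i, ∑ j, (C₂ * δ ^ (2 * H)) * (∫ ω, ξ i ω * ξ j ω ∂P) := by
        refine Finset.sum_le_sum fun i _ => Finset.sum_le_sum fun j _ => ?_
        rw [sq]
        exact mul_le_mul_of_nonneg_right (hcov i j) (hpos i j)
    _ = (C₂ * δ ^ (2 * H)) * ∑ i, ∑ j, (∫ ω, ξ i ω * ξ j ω ∂P) := by
        rw [Finset.mul_sum]
        exact Finset.sum_congr rfl fun i _ => by rw [Finset.mul_sum]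
    _ ≤ (C₂ * δ ^ (2 * H)) * (C₂ * (b - a) ^ (2 * H)) := by
        rw [hsum]
        exact mul_le_mul_of_nonneg_left htot hM
    _ = C₂ ^ 2 * δ ^ (2 * H) * (b - a) ^ (2 * H) := by ring
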